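/- Let q be a power of the prime p, let γ be an element of order n' in an extension field K of F_q with gcd(n', p) = 1, let s ≥ 0 and let f, m be integers. Let c(X) = Σ_u c_u X^u ∈ F_q[X] have support Y = { u : c_u ≠ 0 }. Then, in the formal power series ring K[[X]], Σ_{i=0}^∞ c^{[p^s−1]}(γ^{f+im}) X^i = Σ_{u ∈ Y} binom(u, p^s−1) c_u γ^{(u−p^s+1)f} · (1 − γ^{(u−p^s+1)m} X)^{−1}. -/

import Mathlib

open Polynomial

lemma geom_aux {K : Type*} [Field K] (b : K) :
    (1 - PowerSeries.C b * PowerSeries.X)⁻¹ = PowerSeries.mk fun i => b ^ i := by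
  rw [PowerSeries.inv_eq_iff_mul_eq_one (by simp)]
  ext n
  rw [mul_sub, mul_one, map_sub,
    show (PowerSeries.mk fun i => b ^ i) * (PowerSeries.C b * PowerSeries.X)
      = ((PowerSeries.mk fun i => b ^ i) * PowerSeries.X) * PowerSeries.C b by ring,
    PowerSeries.coeff_mul_C]
  rcases n with _ | n
  · simp
  · rw [PowerSeries.coeff_succ_mul_X]
    simp [pow_succ, PowerSeries.coeff_one]

lemma unit_zpow_pow {K : Type*} [Field K] (γ : Kˣ) (a : ℤ) (j : ℕ) :
    ((γ ^ a : Kˣ) : K) ^ j = ((γ ^ (a * j) : Kˣ) : K) := by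
  rw [zpow_mul, zpow_natCast]
  norm_cast

theorem powerSeries_hasseDeriv_eval_eq_sum_geometric
    {F K : Type*} [Field F] [Fintype F] [Field K] [Algebra F K]
    (p t s n' : ℕ) (hp : p.Prime) (hq : Fintype.card F = p ^ t) (ht : 0 < t)
    (hn'p : Nat.Coprime n' p)
    (γ : Kˣ) (hγ : orderOf γ = n')
    (f m : ℤ) (c : F[X]) :
    (PowerSeries.mk fun i : ℕ =>
        aeval ((γ ^ (f + (i : ℤ) * m) : Kˣ) : K) (hasseDeriv (p ^ s - 1) c)) =
      ∑ u ∈ c.support,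
        PowerSeries.C ((u.choose (p ^ s - 1) : K) * algebraMap F K (c.coeff u) *
            ((γ ^ (((u : ℤ) - (p ^ s : ℕ) + 1) * f) : Kˣ) : K)) *
          (1 - PowerSeries.C ((γ ^ (((u : ℤ) - (p ^ s : ℕ) + 1) * m) : Kˣ) : K) *
            PowerSeries.X)⁻¹ := by
  classical
  set k := p ^ s - 1 with hk
  simp_rw [geom_aux]
  ext n
  rw [PowerSeries.coeff_mk, map_sum]
  simp_rw [PowerSeries.coeff_C_mul, PowerSeries.coeff_mk,
    Polynomial.hasseDeriv_apply, Polynomial.sum_def, map_sum, aeval_monomial]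
  refine Finset.sum_congr rfl fun u hu => ?_
  rw [map_mul, map_natCast]
  by_cases hku : k ≤ u
  · have hps : 1 ≤ p ^ s := Nat.one_le_pow _ _ hp.pos
    have he : (u : ℤ) - (p ^ s : ℕ) + 1 = ((u - k : ℕ) : ℤ) := by
      rw [hk]; push_cast [Nat.cast_sub (hk ▸ hku : p ^ s - 1 ≤ u), Nat.cast_sub hps]; ring
    have key : ((γ ^ ((f + (n : ℤ) * m) * ((u - k : ℕ) : ℤ)) : Kˣ) : K)
        = ((γ ^ (((u - k : ℕ) : ℤ) * f) : Kˣ) : K) *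
          ((γ ^ (((u - k : ℕ) : ℤ) * m * (n : ℤ)) : Kˣ) : K) := by
      rw [← Units.val_mul, ← zpow_add]
      congr 1
      ring
    rw [he, unit_zpow_pow, unit_zpow_pow, key]
    ring
  · rw [Nat.choose_eq_zero_of_lt (lt_of_not_ge hku)]
    simp
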